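/- Let r ≥ 1 and let x₁,…,xₙ and y₁,…,yₙ be nonnegative real numbers. Define uᵢ = max(xᵢ, yᵢ) and vᵢ = min(xᵢ, yᵢ). Then (∑ uᵢ)^r + (∑ vᵢ)^r ≥ (∑ xᵢ)^r + (∑ yᵢ)^r. -/

import Mathlib

theorem stmt2 (n : ℕ) (hn : 0 < n) (r : ℝ) (hr : r ≥ 1) (x y : Fin n → ℝ)
    (hx : ∀ i, 0 ≤ x i) (hy : ∀ i, 0 ≤ y i) :
    (∑ i, max (x i) (y i)) ^ r + (∑ i, min (x i) (y i)) ^ r ≥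
      (∑ i, x i) ^ r + (∑ i, y i) ^ r := by
  set U := ∑ i, max (x i) (y i) with hU
  set V := ∑ i, min (x i) (y i) with hV
  set X := ∑ i, x i with hX
  set Y := ∑ i, y i with hY
  have hsum : U + V = X + Y := by
    rw [hU, hV, hX, hY, ← Finset.sum_add_distrib, ← Finset.sum_add_distrib]
    exact Finset.sum_congr rfl fun i _ => max_add_min _ _
  have hVX : V ≤ X := Finset.sum_le_sum fun i _ => min_le_left _ _
  have hXU : X ≤ U := Finset.sum_le_sum fun i _ => le_max_left _ _
  have hV0 : 0 ≤ V := Finset.sum_nonneg fun i _ => le_min (hx i) (hy i)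
  have hU0 : 0 ≤ U := hV0.trans (hVX.trans hXU)
  have hconv : ConvexOn ℝ (Set.Ici (0:ℝ)) fun t : ℝ => t ^ r :=
    convexOn_rpow hr
  rcases eq_or_lt_of_le (hVX.trans hXU) with heq | hlt
  · -- V = U, so X = V and Y = V
    have hXV : X = V := le_antisymm (hXU.trans heq.ge) hVX
    have hYV : Y = V := by linarith
    rw [hXV, hYV]
    have : U = V := heq.symm
    rw [this]
  · set a := (X - V) / (U - V) with ha
    have hUV : 0 < U - V := by linarith
    have ha0 : 0 ≤ a := div_nonneg (by linarith) hUV.le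
    have ha1 : a ≤ 1 := by
      rw [ha, div_le_one hUV]; linarith
    have hcomb : a * U + (1 - a) * V = X := by
      have hmul : a * (U - V) = X - V := by rw [ha]; exact div_mul_cancel₀ _ hUV.ne'
      linarith
    have hcomb2 : (1 - a) * U + a * V = Y := by
      have : (a * U + (1 - a) * V) + ((1 - a) * U + a * V) = U + V := by ring
      linarith [hcomb, hsum]
    have h1 := hconv.2 (Set.mem_Ici.2 hU0) (Set.mem_Ici.2 hV0) ha0 (by linarith : (0:ℝ) ≤ 1 - a) (by ring)
    have h2 := hconv.2 (Set.mem_Ici.2 hU0) (Set.mem_Ici.2 hV0) (by linarith : (0:ℝ) ≤ 1 - a) ha0 (by ring)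
    simp only [smul_eq_mul] at h1 h2
    rw [hcomb] at h1
    rw [hcomb2] at h2
    have := add_le_add h1 h2
    have hfinal : X ^ r + Y ^ r ≤ U ^ r + V ^ r := by nlinarith [this]
    exact hfinal
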